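/- Let n ≥ 1 and let ξ_n = sin( 2^n π / (2(2^n+1)) ). Then for every x ∈ [0,1], at least one of the following two inequalities holds: G_n(x) ≤ G_n(ξ_n), or G_n(x)·G_n(f_n(x)) ≤ (G_n(ξ_n))². -/

import Mathlib

set_option maxHeartbeats 1600000


open Real

noncomputable section

/-- The angle-doubling function `f₁(x) = 2x√(1-x²)`; `f_ν` is its `ν`-th iterate,
with `f₀ = id`. -/
def fIter (x : ℝ) : ℝ := 2 * x * Real.sqrt (1 - x ^ 2)

/-- `G_n = f₀ · ∏_{ν=1}^{n-1} (g ∘ f_ν)` with `g(x) = √(1-x²)`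
(an empty product equals `1`, so `G₁ = f₀`). -/
def Gfun (n : ℕ) (x : ℝ) : ℝ :=
  x * ∏ ν ∈ Finset.Icc 1 (n - 1), Real.sqrt (1 - (fIter^[ν] x) ^ 2)




lemma fIter_sin (t : ℝ) : fIter |Real.sin t| = |Real.sin (2*t)| := by
  unfold fIter
  rw [sq_abs, show (1 : ℝ) - Real.sin t ^ 2 = Real.cos t ^ 2 by rw [Real.cos_sq']]
  rw [Real.sqrt_sq_eq_abs, Real.sin_two_mul]
  rw [abs_mul, abs_mul, abs_two]

lemma fIter_iter_sin (ν : ℕ) (t : ℝ) : fIter^[ν] |Real.sin t| = |Real.sin (2^ν * t)| := by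
  induction ν generalizing t with
  | zero => simp
  | succ k ih =>
    rw [Function.iterate_succ_apply, fIter_sin, ih (2*t)]
    ring_nf

lemma sqrt_one_sub_sin_sq (s : ℝ) : Real.sqrt (1 - Real.sin s ^ 2) = |Real.cos s| := by
  rw [show (1 : ℝ) - Real.sin s ^ 2 = Real.cos s ^ 2 by rw [Real.cos_sq']]
  exact Real.sqrt_sq_eq_abs _

lemma Gfun_succ (k : ℕ) (hk : 1 ≤ k) (x : ℝ) :
    Gfun (k+1) x = Gfun k x * Real.sqrt (1 - (fIter^[k] x) ^ 2) := by
  unfold Gfun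
  rw [show k + 1 - 1 = (k - 1) + 1 by omega]
  rw [Finset.prod_Icc_succ_top (by omega)]
  rw [show k - 1 + 1 = k by omega]
  ring

/-- Key identity: `2^n * G_n(|sin t|) * |cos t| = |sin (2^n t)|`. -/
lemma Gfun_sin (n : ℕ) (hn : 1 ≤ n) (t : ℝ) :
    2^n * Gfun n |Real.sin t| * |Real.cos t| = |Real.sin (2^n * t)| := by
  induction n with
  | zero => omega
  | succ k ih =>
    rcases Nat.lt_or_ge 1 (k+1) with h2 | h1
    · have hk : 1 ≤ k := by omega
      rw [Gfun_succ k hk, fIter_iter_sin, sq_abs, sqrt_one_sub_sin_sq]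
      have : (2:ℝ)^(k+1) * (Gfun k |Real.sin t| * |Real.cos (2^k * t)|) * |Real.cos t|
          = 2 * (2^k * Gfun k |Real.sin t| * |Real.cos t|) * |Real.cos (2^k * t)| := by
        ring
      rw [this, ih hk]
      rw [show (2:ℝ)^(k+1) * t = 2 * (2^k * t) by ring, Real.sin_two_mul]
      rw [abs_mul, abs_mul, abs_two]
    · have hk : k = 0 := by omega
      subst hk
      simp only [Gfun]
      norm_num
      rw [show (2:ℝ) * t = 2 * t from rfl, Real.sin_two_mul, abs_mul, abs_mul, abs_two]



lemma abs_sin_two_pow_le (k : ℕ) (t : ℝ) : |Real.sin (2^k * t)| ≤ 2^k * |Real.sin t| := by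
  induction k with
  | zero => simp
  | succ m ih =>
    have : (2:ℝ)^(m+1) * t = 2 * (2^m * t) := by ring
    rw [this, Real.sin_two_mul, abs_mul, abs_mul, abs_two]
    calc 2 * |Real.sin (2^m*t)| * |Real.cos (2^m*t)| ≤ 2 * |Real.sin (2^m*t)| * 1 := by
          apply mul_le_mul_of_nonneg_left (Real.abs_cos_le_one _) (by positivity)
      _ = 2 * |Real.sin (2^m*t)| := by ring
      _ ≤ 2 * (2^m * |Real.sin t|) := by nlinarith [ih]
      _ = 2^(m+1) * |Real.sin t| := by ring

lemma abs_sin_nat_pi_sub (m : ℕ) (s : ℝ) : |Real.sin (m * π - s)| = |Real.sin s| := by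
  rw [Real.sin_sub, Real.sin_nat_mul_pi]
  rw [zero_mul, zero_sub, abs_neg, abs_mul]
  rw [show |Real.cos (m * π)| = 1 from Real.abs_cos_int_mul_pi m, one_mul]

lemma tan_two_pow_le (k : ℕ) (t : ℝ) (ht : 0 ≤ t) (ht2 : 2^k * t < π/2) :
    2^k * Real.tan t ≤ Real.tan (2^k * t) := by
  induction k with
  | zero => simp
  | succ m ih =>
    have h2m : (2:ℝ)^m * t < π/2 := by
      have : (2:ℝ)^m * t ≤ 2^(m+1) * t := by
        apply mul_le_mul_of_nonneg_right _ ht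
        apply pow_le_pow_right₀ (by norm_num) (by omega)
      linarith
    have ih' := ih h2m
    have h4 : (2:ℝ)^m * t < π/4 := by
      have : (2:ℝ)^(m+1) * t = 2 * (2^m * t) := by ring
      nlinarith [ht2]
    have htan1 : Real.tan (2^m * t) < 1 := by
      calc Real.tan (2^m*t) < Real.tan (π/4) :=
            Real.tan_lt_tan_of_nonneg_of_lt_pi_div_two (by positivity)
              (by linarith [Real.pi_pos]) h4
        _ = 1 := Real.tan_pi_div_four
    have htan0 : 0 ≤ Real.tan (2^m * t) := Real.tan_nonneg_of_nonneg_of_le_pi_div_two (by positivity) h2m.le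
    have : (2:ℝ)^(m+1) * t = 2 * (2^m * t) := by ring
    rw [this, Real.tan_two_mul]
    have hden : 0 < 1 - Real.tan (2^m*t)^2 := by nlinarith
    calc (2:ℝ)^(m+1) * Real.tan t = 2 * (2^m * Real.tan t) := by ring
      _ ≤ 2 * Real.tan (2^m * t) := by linarith
      _ ≤ 2 * Real.tan (2^m * t) / (1 - Real.tan (2^m*t)^2) := by
          rw [le_div_iff₀ hden]
          nlinarith



def lsr (c : ℝ) (v : ℝ) : ℝ := Real.log (Real.sin v) - Real.log (Real.sin (v/c))
def lsrD (c : ℝ) (v : ℝ) : ℝ :=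
  Real.cos v / Real.sin v - Real.cos (v/c) / (c * Real.sin (v/c))

lemma sin_pos_of_Ioo {v : ℝ} (h : v ∈ Set.Ioo 0 π) : 0 < Real.sin v :=
  Real.sin_pos_of_pos_of_lt_pi h.1 h.2

lemma sin_div_pos {c v : ℝ} (hc : 2 ≤ c) (h : v ∈ Set.Ioo 0 π) : 0 < Real.sin (v/c) := by
  apply Real.sin_pos_of_pos_of_lt_pi
  · exact div_pos h.1 (by linarith)
  · have : v / c < v := by
      rw [div_lt_iff₀ (by linarith)]
      nlinarith [h.1]
    linarith [h.2]

lemma hasDerivAt_lsr {c v : ℝ} (hc : 2 ≤ c) (h : v ∈ Set.Ioo 0 π) :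
    HasDerivAt (lsr c) (lsrD c v) v := by
  have hs := sin_pos_of_Ioo h
  have hsc := sin_div_pos hc h
  have hc0 : c ≠ 0 := by linarith
  have h1 : HasDerivAt (fun v => Real.log (Real.sin v)) (Real.cos v / Real.sin v) v := by
    simpa [div_eq_mul_inv] using (Real.hasDerivAt_sin v).log hs.ne'
  have h2 : HasDerivAt (fun v : ℝ => Real.sin (v/c)) (Real.cos (v/c) * (1/c)) v :=
    by have := (Real.hasDerivAt_sin (v/c)).comp v ((hasDerivAt_id' v).div_const c); exact this
  have h3 := h2.log hsc.ne'
  have heq : Real.cos (v/c) * (1/c) / Real.sin (v/c)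
      = Real.cos (v/c) / (c * Real.sin (v/c)) := by
    field_simp
  rw [heq] at h3
  exact h1.sub h3

lemma hasDerivAt_lsrD {c v : ℝ} (hc : 2 ≤ c) (h : v ∈ Set.Ioo 0 π) :
    HasDerivAt (lsrD c)
      (-(1 / Real.sin v ^ 2) + 1 / (c^2 * Real.sin (v/c) ^ 2)) v := by
  have hs := sin_pos_of_Ioo h
  have hsc := sin_div_pos hc h
  have hc0 : (0:ℝ) < c := by linarith
  have h1' := (Real.hasDerivAt_cos v).div (Real.hasDerivAt_sin v) hs.ne'
  have e1 : (-Real.sin v * Real.sin v - Real.cos v * Real.cos v) / Real.sin v ^ 2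
      = -(1 / Real.sin v ^ 2) := by
    have hpy := Real.sin_sq_add_cos_sq v
    rw [show -Real.sin v * Real.sin v - Real.cos v * Real.cos v
        = -(Real.sin v^2 + Real.cos v^2) by ring, hpy]
    ring
  rw [e1] at h1'
  have h2 : HasDerivAt (fun v : ℝ => Real.cos (v/c)) (-Real.sin (v/c) * (1/c)) v :=
    by have := (Real.hasDerivAt_cos (v/c)).comp v ((hasDerivAt_id' v).div_const c); exact this
  have h3 : HasDerivAt (fun v : ℝ => c * Real.sin (v/c)) (c * (Real.cos (v/c) * (1/c))) v :=
    by have := ((Real.hasDerivAt_sin (v/c)).comp v ((hasDerivAt_id' v).div_const c)).const_mul c; exact this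
  have h4 := h2.div h3 (by positivity)
  have e2 : (-Real.sin (v/c) * (1/c) * (c * Real.sin (v/c))
        - Real.cos (v/c) * (c * (Real.cos (v/c) * (1/c)))) / (c * Real.sin (v/c)) ^ 2
      = -(1 / (c^2 * Real.sin (v/c) ^ 2)) := by
    have hpy := Real.sin_sq_add_cos_sq (v/c)
    have hnum : -Real.sin (v/c) * (1/c) * (c * Real.sin (v/c))
        - Real.cos (v/c) * (c * (Real.cos (v/c) * (1/c)))
        = -(Real.sin (v/c)^2 + Real.cos (v/c)^2) := by
      field_simp
      linear_combination
    rw [hnum, hpy, mul_pow]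
    ring
  rw [e2] at h4
  have := h1'.sub h4
  rw [sub_neg_eq_add] at this
  exact this



lemma two_le_two_pow (k : ℕ) (hk : 1 ≤ k) : (2:ℝ) ≤ 2^k := by
  calc (2:ℝ) = 2^1 := by norm_num
    _ ≤ 2^k := by apply pow_le_pow_right₀ (by norm_num) hk

lemma cos_div_pos {c v : ℝ} (hc : 2 ≤ c) (h : v ∈ Set.Ioo 0 π) : 0 < Real.cos (v/c) := by
  apply Real.cos_pos_of_mem_Ioo
  constructor
  · have : 0 < v / c := div_pos h.1 (by linarith)
    linarith [Real.pi_pos]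
  · rw [div_lt_iff₀ (by linarith : (0:ℝ) < c)]
    nlinarith [h.2, Real.pi_pos]

lemma lsrD_nonpos (k : ℕ) (hk : 1 ≤ k) {v : ℝ} (h : v ∈ Set.Ioo 0 π) : lsrD (2^k) v ≤ 0 := by
  have hc : (2:ℝ) ≤ 2^k := two_le_two_pow k hk
  have hs := sin_pos_of_Ioo h
  have hsc := sin_div_pos hc h
  have hcc := cos_div_pos hc h
  unfold lsrD
  rcases le_or_gt (Real.cos v) 0 with hcv | hcv
  · have h1 : Real.cos v / Real.sin v ≤ 0 := div_nonpos_iff.mpr (Or.inr ⟨hcv, hs.le⟩)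
    have h2 : 0 ≤ Real.cos (v/2^k) / (2^k * Real.sin (v/2^k)) := by positivity
    linarith
  · have hv2 : v < π/2 := by
      by_contra hcon
      push_neg at hcon
      have := Real.cos_nonpos_of_pi_div_two_le_of_le hcon (by linarith [h.2, Real.pi_pos])
      linarith
    have hcanc : (2:ℝ)^k * (v/2^k) = v := by field_simp
    have ht := tan_two_pow_le k (v/2^k) (le_of_lt (div_pos h.1 (by positivity))) (by rw [hcanc]; exact hv2)
    rw [hcanc, Real.tan_eq_sin_div_cos, Real.tan_eq_sin_div_cos, ← mul_div_assoc] at ht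
    rw [div_le_div_iff₀ hcc hcv] at ht
    -- ht : 2^k * sin(v/2^k) * cos v ≤ sin v * cos (v/2^k)
    rw [sub_nonpos, div_le_div_iff₀ hs (by positivity)]
    nlinarith [ht]

lemma lsrD_antitoneOn (k : ℕ) (hk : 1 ≤ k) : AntitoneOn (lsrD (2^k)) (Set.Ioo 0 π) := by
  have hc : (2:ℝ) ≤ 2^k := two_le_two_pow k hk
  apply antitoneOn_of_deriv_nonpos (convex_Ioo 0 π)
  · intro x hx
    exact (hasDerivAt_lsrD hc hx).continuousAt.continuousWithinAt
  · intro x hx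
    rw [interior_Ioo] at hx
    exact (hasDerivAt_lsrD hc hx).differentiableAt.differentiableWithinAt
  · intro x hx
    rw [interior_Ioo] at hx
    rw [(hasDerivAt_lsrD hc hx).deriv]
    have hs := sin_pos_of_Ioo hx
    have hsc := sin_div_pos hc hx
    have habs : |Real.sin x| ≤ 2^k * |Real.sin (x/2^k)| := by
      have := abs_sin_two_pow_le k (x/2^k)
      rwa [mul_div_cancel₀ x (by positivity : ((2:ℝ)^k) ≠ 0)] at this
    rw [abs_of_pos hs, abs_of_pos hsc] at habs
    have hsq : Real.sin x ^ 2 ≤ (2^k)^2 * Real.sin (x/2^k)^2 := by nlinarith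
    have h1 : 1 / ((2^k:ℝ)^2 * Real.sin (x/2^k)^2) ≤ 1 / Real.sin x ^ 2 := by
      apply one_div_le_one_div_of_le (by positivity) hsq
    linarith

lemma lsr_antitoneOn (k : ℕ) (hk : 1 ≤ k) : AntitoneOn (lsr (2^k)) (Set.Ioo 0 π) := by
  have hc : (2:ℝ) ≤ 2^k := two_le_two_pow k hk
  apply antitoneOn_of_deriv_nonpos (convex_Ioo 0 π)
  · intro x hx
    exact (hasDerivAt_lsr hc hx).continuousAt.continuousWithinAt
  · intro x hx
    rw [interior_Ioo] at hx
    exact (hasDerivAt_lsr hc hx).differentiableAt.differentiableWithinAt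
  · intro x hx
    rw [interior_Ioo] at hx
    rw [(hasDerivAt_lsr hc hx).deriv]
    exact lsrD_nonpos k hk hx

lemma lsr_concaveOn (k : ℕ) (hk : 1 ≤ k) : ConcaveOn ℝ (Set.Ioo 0 π) (lsr (2^k)) := by
  have hc : (2:ℝ) ≤ 2^k := two_le_two_pow k hk
  apply AntitoneOn.concaveOn_of_deriv (convex_Ioo 0 π)
  · intro x hx
    exact (hasDerivAt_lsr hc hx).continuousAt.continuousWithinAt
  · intro x hx
    rw [interior_Ioo] at hx
    exact (hasDerivAt_lsr hc hx).differentiableAt.differentiableWithinAt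
  · intro a ha b hb hab
    rw [interior_Ioo] at ha hb
    rw [(hasDerivAt_lsr hc ha).deriv, (hasDerivAt_lsr hc hb).deriv]
    exact lsrD_antitoneOn k hk ha hb hab

lemma ratio_le (k : ℕ) (hk : 1 ≤ k) {a b : ℝ} (ha : 0 < a) (hab : a ≤ b) (hb : b < π) :
    Real.sin b * Real.sin (a/2^k) ≤ Real.sin a * Real.sin (b/2^k) := by
  have hc : (2:ℝ) ≤ 2^k := two_le_two_pow k hk
  have hma : a ∈ Set.Ioo 0 π := ⟨ha, lt_of_le_of_lt hab hb⟩
  have hmb : b ∈ Set.Ioo 0 π := ⟨lt_of_lt_of_le ha hab, hb⟩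
  have h := lsr_antitoneOn k hk hma hmb hab
  unfold lsr at h
  have p1 := sin_pos_of_Ioo hma
  have p2 := sin_pos_of_Ioo hmb
  have p3 := sin_div_pos hc hma
  have p4 := sin_div_pos hc hmb
  have h2 : Real.log (Real.sin b * Real.sin (a/2^k))
      ≤ Real.log (Real.sin a * Real.sin (b/2^k)) := by
    rw [Real.log_mul p2.ne' p3.ne', Real.log_mul p1.ne' p4.ne']
    linarith
  exact (Real.log_le_log_iff (by positivity) (by positivity)).mp h2

lemma concave_combo (k : ℕ) (hk : 1 ≤ k) {a m b : ℝ} (ha : 0 < a) (ham : a ≤ m)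
    (hmb : m ≤ b) (hb : b < π) (hrel : b - m = 2^k * (m - a)) :
    Real.sin a * Real.sin b * Real.sin (m/2^k)^2
      ≤ Real.sin m^2 * (Real.sin (a/2^k) * Real.sin (b/2^k)) := by
  have hc : (2:ℝ) ≤ 2^k := two_le_two_pow k hk
  have hma : a ∈ Set.Ioo 0 π := ⟨ha, by linarith⟩
  have hmm : m ∈ Set.Ioo 0 π := ⟨by linarith, by linarith⟩
  have hmbb : b ∈ Set.Ioo 0 π := ⟨by linarith, hb⟩
  have p1 := sin_pos_of_Ioo hma
  have p2 := sin_pos_of_Ioo hmm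
  have p3 := sin_pos_of_Ioo hmbb
  have p4 := sin_div_pos hc hma
  have p5 := sin_div_pos hc hmm
  have p6 := sin_div_pos hc hmbb
  have key : lsr (2^k) a + lsr (2^k) b ≤ 2 * lsr (2^k) m := by
    rcases eq_or_lt_of_le ham with heq | hlt
    · have e1 : lsr (2^k) a = lsr (2^k) m := by rw [heq]
      have e2 : lsr (2^k) b = lsr (2^k) m := by
        have hbm : b = m := by
          have h0 : (2:ℝ)^k * (m - a) = 0 := by rw [heq]; ring
          linarith [hrel]
        rw [hbm]
      rw [e1, e2]
      linarith
    · have hmblt : m < b := by nlinarith [hrel]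
      have hslope := (lsr_concaveOn k hk).slope_anti_adjacent hma hmbb hlt hmblt
      -- hslope : (f b - f m)/(b - m) ≤ (f m - f a)/(m - a)
      have h1 : lsr (2^k) b - lsr (2^k) m ≤ 2^k * (lsr (2^k) m - lsr (2^k) a) := by
        rw [div_le_div_iff₀ (by linarith) (by linarith)] at hslope
        have hma' : 0 < m - a := by linarith
        rw [hrel] at hslope
        have e : (lsr (2^k) m - lsr (2^k) a) * (2^k * (m - a))
            = (2^k * (lsr (2^k) m - lsr (2^k) a)) * (m - a) := by ring
        rw [e] at hslope
        exact le_of_mul_le_mul_right hslope hma'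
      have h2 : lsr (2^k) m ≤ lsr (2^k) a := lsr_antitoneOn k hk hma hmm ham
      nlinarith [h1, h2, hc]
  unfold lsr at key
  have h2 : Real.log (Real.sin a * Real.sin b * Real.sin (m/2^k)^2)
      ≤ Real.log (Real.sin m^2 * (Real.sin (a/2^k) * Real.sin (b/2^k))) := by
    rw [Real.log_mul (by positivity) (by positivity), Real.log_mul p1.ne' p3.ne',
      Real.log_mul (by positivity) (by positivity), Real.log_mul p4.ne' p6.ne',
      Real.log_pow, Real.log_pow]
    push_cast
    linarith
  exact (Real.log_le_log_iff (by positivity) (by positivity)).mp h2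




lemma numeric1 (n : ℕ) (hn : 1 ≤ n) :
    Real.sin (π/(2*(2^n+1))) ≤ Real.cos (π/(2*(2^n+1))) * Real.sin (π/2^n) := by
  have hπ1 : (3.14:ℝ) < π := by linarith [Real.pi_gt_d6]
  have hπ2 : π < 3.15 := by linarith [Real.pi_lt_d2]
  rcases Nat.lt_or_ge n 2 with h2 | h2
  · have : n = 1 := by omega
    subst this
    norm_num
    nlinarith [Real.sq_sqrt (by norm_num : (0:ℝ) ≤ 3), Real.sqrt_nonneg 3]
  · set P : ℝ := (2:ℝ)^n with hP
    have hP4 : (4:ℝ) ≤ P := by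
      rw [hP, show (4:ℝ) = 2^2 by norm_num]
      exact pow_le_pow_right₀ (by norm_num) h2
    set d : ℝ := π/(2*(P+1)) with hd
    set x : ℝ := π/P with hx
    have hx0 : 0 < x := by positivity
    have hd0 : 0 < d := by positivity
    have hxhalf : x/2 = π/(2*P) := by rw [hx]; ring
    have hdx : d ≤ x/2 := by
      rw [hd, hxhalf]
      apply div_le_div_of_nonneg_left Real.pi_pos.le (by linarith) (by linarith)
    have hx1 : x ≤ 0.7875 := by
      rw [hx, div_le_iff₀ (by linarith)]
      nlinarith
    have hsd : Real.sin d < d := Real.sin_lt hd0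
    have hcd : 1 - d^2/2 ≤ Real.cos d := Real.one_sub_sq_div_two_le_cos
    have hd1 : d ≤ 0.315 := by
      rw [hd, div_le_iff₀ (by linarith)]
      nlinarith
    have hcd2 : (0.95:ℝ) ≤ Real.cos d := by nlinarith
    have hsx : x - x^3/4 < Real.sin x := lt_of_le_of_lt (by nlinarith [pow_pos hx0 3]) (Real.sin_gt_sub_cube hx0)
    have hx2 : x^2 ≤ 0.62016 := by nlinarith
    have hx3 : x^3 ≤ 0.62016*x := by nlinarith [mul_le_mul_of_nonneg_right hx2 hx0.le]
    have hsx2 : 0.844 * x ≤ Real.sin x := by nlinarith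
    have key : (0.95:ℝ) * (0.844 * x) ≤ Real.cos d * Real.sin x := by
      apply mul_le_mul hcd2 hsx2 (by nlinarith) (by linarith)
    calc Real.sin d ≤ x/2 := by linarith
      _ ≤ 0.95 * (0.844*x) := by nlinarith
      _ ≤ Real.cos d * Real.sin x := key

lemma numeric2 (n : ℕ) (hn : 2 ≤ n) :
    (2:ℝ)^n * Real.sin (π/(2*(2^n+1))) ^ 2
      ≤ Real.cos (π/(2*(2^n+1))) ^ 2 * Real.sin (π/2^n) := by
  have hπ1 : (3.14:ℝ) < π := by linarith [Real.pi_gt_d6]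
  have hπ2 : π < 3.15 := by linarith [Real.pi_lt_d2]
  rcases Nat.lt_or_ge n 3 with h3 | h3
  · have : n = 2 := by omega
    subst this
    norm_num
    have hs2 : (1.4:ℝ) ≤ Real.sqrt 2 := by
      nlinarith [Real.sq_sqrt (by norm_num : (0:ℝ) ≤ 2), Real.sqrt_nonneg 2]
    have hd0 : (0:ℝ) < π/10 := by positivity
    have hsd : Real.sin (π/10) < π/10 := Real.sin_lt hd0
    have hsd0 : 0 ≤ Real.sin (π/10) :=
      Real.sin_nonneg_of_nonneg_of_le_pi (by positivity) (by nlinarith)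
    have hs1 : Real.sin (π/10)^2 ≤ (π/10)^2 := by nlinarith
    have hcd : 1 - (π/10)^2/2 ≤ Real.cos (π/10) := Real.one_sub_sq_div_two_le_cos
    have hcd2 : (0.95:ℝ) ≤ Real.cos (π/10) := by nlinarith
    have hcd3 : (0.9025:ℝ) ≤ Real.cos (π/10)^2 := by nlinarith
    nlinarith [hs1, hcd3, hs2]
  · set P : ℝ := (2:ℝ)^n with hP
    have hP8 : (8:ℝ) ≤ P := by
      rw [hP, show (8:ℝ) = 2^3 by norm_num]
      exact pow_le_pow_right₀ (by norm_num) h3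
    set d : ℝ := π/(2*(P+1)) with hd
    set x : ℝ := π/P with hx
    have hx0 : 0 < x := by positivity
    have hd0 : 0 < d := by positivity
    have hxhalf : x/2 = π/(2*P) := by rw [hx]; ring
    have hdx : d ≤ x/2 := by
      rw [hd, hxhalf]
      apply div_le_div_of_nonneg_left Real.pi_pos.le (by linarith) (by linarith)
    have hx1 : x ≤ 0.394 := by
      rw [hx, div_le_iff₀ (by linarith)]
      nlinarith
    have hsd : Real.sin d < d := Real.sin_lt hd0
    have hsd0 : 0 ≤ Real.sin d :=
      Real.sin_nonneg_of_nonneg_of_le_pi hd0.le (by nlinarith)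
    have hd1 : d ≤ 0.197 := by linarith
    have hcd : 1 - d^2/2 ≤ Real.cos d := Real.one_sub_sq_div_two_le_cos
    have hcd2 : (0.98:ℝ) ≤ Real.cos d := by nlinarith
    have hsx : x - x^3/4 < Real.sin x := lt_of_le_of_lt (by nlinarith [pow_pos hx0 3]) (Real.sin_gt_sub_cube hx0)
    have hx2 : x^2 ≤ 0.155237 := by nlinarith
    have hx3 : x^3 ≤ 0.155237*x := by nlinarith [mul_le_mul_of_nonneg_right hx2 hx0.le]
    have hsx2 : 0.961 * x ≤ Real.sin x := by nlinarith
    have hL : P * Real.sin d ^ 2 ≤ 0.7875 * x := by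
      have h1 : P * Real.sin d ^2 ≤ P * (x/2)^2 := by
        apply mul_le_mul_of_nonneg_left _ (by linarith)
        nlinarith
      have h2 : P * (x/2)^2 = (π/4) * x := by
        rw [hxhalf, hx]
        field_simp
        ring
      nlinarith
    have hR : 0.9223 * x ≤ Real.cos d ^2 * Real.sin x := by
      have h1 : (0.98:ℝ)^2 ≤ Real.cos d ^2 := by nlinarith
      have h2 : (0.98:ℝ)^2 * (0.961*x) ≤ Real.cos d^2 * Real.sin x := by
        apply mul_le_mul h1 hsx2 (by nlinarith) (by positivity)
      nlinarith
    linarith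













lemma abs_sin_pow_pi_div_two_sub (n : ℕ) (hn : 1 ≤ n) (y : ℝ) :
    |Real.sin (2^n * (π/2 - y))| = |Real.sin (2^n * y)| := by
  have hsplit : (2:ℝ)^n * (π/2 - y) = (2^(n-1) : ℕ) * π - 2^n * y := by
    push_cast
    have h2 : (2:ℝ)^n = 2 * 2^(n-1) := by
      rw [← pow_succ']
      congr 1
      omega
    rw [h2]
    ring
  rw [hsplit, abs_sin_nat_pi_sub]

lemma Gfun_cos (n : ℕ) (hn : 1 ≤ n) {y : ℝ} (h0 : 0 ≤ y) (h1 : y ≤ π/2) :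
    2^n * Gfun n (Real.cos y) * Real.sin y = |Real.sin (2^n * y)| := by
  have h := Gfun_sin n hn (π/2 - y)
  have e1 : |Real.sin (π/2 - y)| = Real.cos y := by
    rw [Real.sin_pi_div_two_sub]
    exact abs_of_nonneg (Real.cos_nonneg_of_mem_Icc ⟨by linarith [Real.pi_pos], h1⟩)
  have e2 : |Real.cos (π/2 - y)| = Real.sin y := by
    rw [Real.cos_pi_div_two_sub]
    exact abs_of_nonneg (Real.sin_nonneg_of_nonneg_of_le_pi h0 (by linarith [Real.pi_pos]))
  rw [e1, e2, abs_sin_pow_pi_div_two_sub n hn] at h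
  exact h

/-- Lemma 3.2 (generalized Gel'fond inequality): with `ξ_n = sin(2^n π/(2(2^n+1)))`,
for every `x ∈ [0,1]` either `G_n(x) ≤ G_n(ξ_n)` or
`G_n(x)·G_n(f_n(x)) ≤ (G_n(ξ_n))²`. -/
theorem Gfun_le_or_mul_le (n : ℕ) (hn : 1 ≤ n) (x : ℝ) (hx : x ∈ Set.Icc (0:ℝ) 1) :
    Gfun n x ≤ Gfun n (Real.sin (2 ^ n * π / (2 * (2 ^ n + 1)))) ∨
    Gfun n x * Gfun n (fIter^[n] x) ≤
      Gfun n (Real.sin (2 ^ n * π / (2 * (2 ^ n + 1)))) ^ 2 := by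
  have hπ := Real.pi_pos
  have hN2 : (2:ℝ) ≤ 2^n := two_le_two_pow n hn
  set N : ℝ := (2:ℝ)^n with hN
  clear_value N
  have hN0 : (0:ℝ) < N := by linarith
  set δ : ℝ := π/(2*(N+1)) with hδ
  clear_value δ
  have hδ0 : 0 < δ := by
    rw [hδ]
    exact div_pos hπ (by linarith)
  have hδ6 : δ ≤ π/6 := by
    rw [hδ]
    apply div_le_div_of_nonneg_left hπ.le (by norm_num) (by linarith)
  have hNδ : N * δ = π/2 - δ := by
    rw [hδ]
    field_simp
    ring
  have hθδ : N * π / (2 * (N + 1)) = π/2 - δ := by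
    rw [hδ]
    field_simp
    ring
  have hcosδ : 0 < Real.cos δ :=
    Real.cos_pos_of_mem_Ioo ⟨by linarith, by linarith⟩
  have hsinδ : 0 < Real.sin δ := Real.sin_pos_of_pos_of_lt_pi hδ0 (by linarith)
  have hξ : Real.sin (N * π / (2 * (N + 1))) = Real.cos δ := by
    rw [hθδ, Real.sin_pi_div_two_sub]
  have hGξ : Gfun n (Real.sin (N * π / (2 * (N + 1)))) = Real.cos δ / (N * Real.sin δ) := by
    rw [hξ]
    have h := Gfun_cos n hn hδ0.le (by linarith)
    rw [← hN, show N * δ = π/2 - δ from hNδ, Real.sin_pi_div_two_sub,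
      abs_of_pos hcosδ] at h
    rw [eq_div_iff (mul_pos hN0 hsinδ).ne']
    linear_combination h
  set y : ℝ := Real.arccos x with hy
  have hy0 : 0 ≤ y := Real.arccos_nonneg x
  have hy2 : y ≤ π/2 := Real.arccos_le_pi_div_two.mpr hx.1
  have hxy : Real.cos y = x := Real.cos_arccos (by linarith [hx.1]) hx.2
  clear_value y
  have hEy : N * Gfun n x * Real.sin y = |Real.sin (N * y)| := by
    have h := Gfun_cos n hn hy0 hy2
    rw [← hN] at h
    rw [← hxy]
    exact h
  rcases eq_or_lt_of_le hy0 with hy00 | hy00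
  · -- y = 0, x = 1
    right
    have hx1 : x = 1 := by rw [← hxy, ← hy00, Real.cos_zero]
    have hf1 : fIter^[n] x = 0 := by
      rw [hx1, show (1:ℝ) = |Real.sin (π/2)| by rw [Real.sin_pi_div_two]; norm_num,
        fIter_iter_sin]
      have h := abs_sin_pow_pi_div_two_sub n hn 0
      rw [sub_zero, mul_zero, Real.sin_zero, abs_zero] at h
      rw [h]
    rw [hf1, show Gfun n 0 = 0 by unfold Gfun; simp, mul_zero]
    exact sq_nonneg _
  · have hsy : 0 < Real.sin y := Real.sin_pos_of_pos_of_lt_pi hy00 (by linarith)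
    have hGx : Gfun n x = |Real.sin (N * y)| / (N * Real.sin y) := by
      rw [eq_div_iff (mul_pos hN0 hsy).ne']
      linear_combination hEy
    rcases le_or_gt δ y with hcase | hcase
    · -- disjunct 1
      left
      have key : |Real.sin (N * y)| * Real.sin δ ≤ Real.cos δ * Real.sin y := by
        rcases le_or_gt (N * y) π with hyN | hyN
        · rcases eq_or_lt_of_le hyN with heq | hlt
          · rw [heq, Real.sin_pi, abs_zero, zero_mul]
            exact mul_nonneg hcosδ.le hsy.le
          · have h := ratio_le n hn (a := N*δ) (b := N*y)
              (mul_pos hN0 hδ0) (mul_le_mul_of_nonneg_left hcase hN0.le) hlt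
            rw [← hN] at h
            rw [mul_div_cancel_left₀ δ hN0.ne', mul_div_cancel_left₀ y hN0.ne'] at h
            rw [hNδ, Real.sin_pi_div_two_sub] at h
            have hnn : 0 ≤ Real.sin (N*y) :=
              Real.sin_nonneg_of_nonneg_of_le_pi (mul_nonneg hN0.le hy0) hyN
            rw [abs_of_nonneg hnn]
            linarith [h]
        · have hyN' : π/N < y := by
            rw [div_lt_iff₀ hN0]
            linarith [hyN]
          have h1 : |Real.sin (N*y)| ≤ 1 := Real.abs_sin_le_one _
          have h2 : Real.sin (π/N) ≤ Real.sin y := by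
            apply Real.sin_le_sin_of_le_of_le_pi_div_two _ hy2 hyN'.le
            have hh : (0:ℝ) < π/N := div_pos hπ hN0
            linarith
          have h3 := numeric1 n hn
          rw [← hN, ← hδ] at h3
          have h4 : Real.cos δ * Real.sin (π/N) ≤ Real.cos δ * Real.sin y :=
            mul_le_mul_of_nonneg_left h2 hcosδ.le
          calc |Real.sin (N*y)| * Real.sin δ ≤ 1 * Real.sin δ :=
                mul_le_mul_of_nonneg_right h1 hsinδ.le
            _ = Real.sin δ := one_mul _
            _ ≤ Real.cos δ * Real.sin (π/N) := h3
            _ ≤ Real.cos δ * Real.sin y := h4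
      rw [hGx, hGξ, div_le_div_iff₀ (mul_pos hN0 hsy) (mul_pos hN0 hsinδ)]
      nlinarith [mul_le_mul_of_nonneg_left key hN0.le]
    · -- disjunct 2 : 0 < y < δ
      right
      set u : ℝ := N * y with hu
      clear_value u
      have hu0 : 0 < u := by rw [hu]; exact mul_pos hN0 hy00
      have huδ : u < N * δ := by
        rw [hu]
        exact mul_lt_mul_of_pos_left hcase hN0
      have huπ2 : u < π/2 := by nlinarith [hNδ, huδ, hδ0]
      set w : ℝ := π/2 - u with hw
      clear_value w
      have hwδ : δ < w := by
        rw [hw]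
        nlinarith [hNδ, huδ]
      have hw2 : w < π/2 := by rw [hw]; linarith
      have hsw : 0 < Real.sin w := Real.sin_pos_of_pos_of_lt_pi (by linarith) (by linarith)
      have hsu : 0 ≤ Real.sin u :=
        Real.sin_nonneg_of_nonneg_of_le_pi hu0.le (by linarith)
      have habsu : |Real.sin u| = Real.sin u := abs_of_nonneg hsu
      have hfx : fIter^[n] x = Real.cos w := by
        have hcy : x = |Real.sin (π/2 - y)| := by
          rw [Real.sin_pi_div_two_sub, ← hxy]
          exact (abs_of_nonneg (Real.cos_nonneg_of_mem_Icc ⟨by linarith, hy2⟩)).symm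
        rw [hcy, fIter_iter_sin, abs_sin_pow_pi_div_two_sub n hn, ← hN, ← hu, habsu,
          show u = π/2 - w by rw [hw]; ring, Real.sin_pi_div_two_sub]
      have hEw : N * Gfun n (Real.cos w) * Real.sin w = |Real.sin (N * w)| := by
        have h := Gfun_cos n hn (le_of_lt (lt_trans hδ0 hwδ)) hw2.le
        rw [← hN] at h
        exact h
      have hGfx : Gfun n (fIter^[n] x) = |Real.sin (N * w)| / (N * Real.sin w) := by
        rw [hfx, eq_div_iff (mul_pos hN0 hsw).ne']
        linear_combination hEw
      have key : Real.sin u * |Real.sin (N*w)| * Real.sin δ ^ 2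
          ≤ Real.cos δ ^ 2 * (Real.sin y * Real.sin w) := by
        rcases le_or_gt (N*w) π with hbπ | hbπ
        · -- T3 : last arch
          rcases eq_or_lt_of_le hbπ with heq | hblt
          · rw [heq, Real.sin_pi, abs_zero, mul_zero, zero_mul]
            exact mul_nonneg (sq_nonneg _) (mul_nonneg hsy.le hsw.le)
          · have hrel : N*w - N*δ = N * (N*δ - u) := by
              rw [hw, hu]
              linear_combination (-N) * hNδ
            have hrel2 : N*w - N*δ = 2^n * (N*δ - u) := by rw [← hN]; exact hrel
            have hcc := concave_combo n hn (a := u) (m := N*δ) (b := N*w)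
              hu0 huδ.le (by nlinarith [hwδ, hN0]) hblt hrel2
            rw [← hN] at hcc
            rw [mul_div_cancel_left₀ δ hN0.ne', mul_div_cancel_left₀ w hN0.ne',
              show u/N = y by rw [hu, mul_div_cancel_left₀ y hN0.ne'],
              hNδ, Real.sin_pi_div_two_sub] at hcc
            have hnn : 0 ≤ Real.sin (N*w) :=
              Real.sin_nonneg_of_nonneg_of_le_pi (mul_nonneg hN0.le (by linarith)) hbπ
            rw [abs_of_nonneg hnn]
            linarith [hcc]
        · -- T4 : elsewhere
          have hNgt : 2 < N := by
            by_contra hcon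
            push_neg at hcon
            have h1 : N * w ≤ 2 * w := mul_le_mul_of_nonneg_right hcon (by linarith)
            linarith
          have hn2 : 2 ≤ n := by
            by_contra hcon
            push_neg at hcon
            have hne : n = 1 := by omega
            rw [hN, hne] at hNgt
            norm_num at hNgt
          have h1 : Real.sin u ≤ N * Real.sin y := by
            have h := abs_sin_two_pow_le n y
            rw [← hN, ← hu, abs_of_nonneg hsu,
              abs_of_nonneg (by linarith : (0:ℝ) ≤ Real.sin y)] at h
            exact h
          have h2 : |Real.sin (N*w)| ≤ 1 := Real.abs_sin_le_one _
          have h3 : Real.sin (π/N) ≤ Real.sin w := by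
            apply Real.sin_le_sin_of_le_of_le_pi_div_two _ hw2.le
            · rw [div_le_iff₀ hN0]
              nlinarith [hbπ]
            · have hh : (0:ℝ) < π/N := div_pos hπ hN0
              linarith
          have h4 := numeric2 n hn2
          rw [← hN, ← hδ] at h4
          calc Real.sin u * |Real.sin (N*w)| * Real.sin δ^2
              ≤ (N * Real.sin y) * 1 * Real.sin δ^2 := by
                apply mul_le_mul_of_nonneg_right _ (sq_nonneg _)
                exact mul_le_mul h1 h2 (abs_nonneg _) (mul_nonneg hN0.le hsy.le)
            _ = Real.sin y * (N * Real.sin δ^2) := by ring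
            _ ≤ Real.sin y * (Real.cos δ^2 * Real.sin (π/N)) :=
                mul_le_mul_of_nonneg_left h4 hsy.le
            _ ≤ Real.cos δ^2 * (Real.sin y * Real.sin w) := by
                nlinarith [mul_le_mul_of_nonneg_left h3
                  (mul_nonneg hsy.le (sq_nonneg (Real.cos δ)))]
      rw [hGx, hGfx, hGξ, habsu]
      rw [div_mul_div_comm, div_pow,
        div_le_div_iff₀ (mul_pos (mul_pos hN0 hsy) (mul_pos hN0 hsw))
          (pow_pos (mul_pos hN0 hsinδ) 2)]
      nlinarith [mul_le_mul_of_nonneg_left key (sq_nonneg N)]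

end
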